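/- Knill–Laflamme implies correctability of erasure for the 3-qutrit code: for any single-qutrit operator E acting on site k, the projector P onto the 3-qutrit code satisfies P E P = c_E P for a scalar c_E. -/

import Mathlib

open Matrix Kronecker
open scoped ComplexOrder

noncomputable def cfcH {n : Type*} [Fintype n] [DecidableEq n]
    (f : ℝ → ℝ) (A : Matrix n n ℂ) : Matrix n n ℂ :=
  if hA : A.IsHermitian then
    (hA.eigenvectorUnitary : Matrix n n ℂ) *
      Matrix.diagonal (fun i => (f (hA.eigenvalues i) : ℂ)) *
      star (hA.eigenvectorUnitary : Matrix n n ℂ)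
  else 0

/-- Functional-calculus logarithm of a Hermitian matrix (0 on the kernel). -/
noncomputable def matLog {n : Type*} [Fintype n] [DecidableEq n]
    (A : Matrix n n ℂ) : Matrix n n ℂ := cfcH Real.log A

/-- Von Neumann entropy `S(ρ) = -Tr[ρ log ρ]`. -/
noncomputable def vN {n : Type*} [Fintype n] [DecidableEq n]
    (ρ : Matrix n n ℂ) : ℝ := (-(ρ * matLog ρ).trace).re

/-- Relative entropy `S(ρ‖σ) = Tr[ρ log ρ] - Tr[ρ log σ]`. -/
noncomputable def relEnt {n : Type*} [Fintype n] [DecidableEq n]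
    (ρ σ : Matrix n n ℂ) : ℝ :=
  ((ρ * matLog ρ).trace - (ρ * matLog σ).trace).re

/-- A density matrix: positive semidefinite with unit trace. -/
def IsDensity {n : Type*} [Fintype n] (ρ : Matrix n n ℂ) : Prop :=
  ρ.PosSemidef ∧ ρ.trace = 1

/-- Partial trace over the second tensor factor. -/
noncomputable def ptrB {A B : Type*} [Fintype A] [Fintype B]
    (ρ : Matrix (A × B) (A × B) ℂ) : Matrix A A ℂ :=
  Matrix.of fun i j => ∑ b : B, ρ (i, b) (j, b)

/-- Partial trace over the first tensor factor. -/
noncomputable def ptrA {A B : Type*} [Fintype A] [Fintype B]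
    (ρ : Matrix (A × B) (A × B) ℂ) : Matrix B B ℂ :=
  Matrix.of fun i j => ∑ a : A, ρ (a, i) (a, j)

/-- The three codewords of the 3-qutrit code. -/
noncomputable def qutritCW (m : Fin 3) : Fin 3 × Fin 3 × Fin 3 → ℂ :=
  fun x => if x.2.1 = x.1 + m ∧ x.2.2 = x.1 + m + m
    then ((Real.sqrt 3)⁻¹ : ℝ) else 0

/-- Partial trace keeping the first qutrit. -/
noncomputable def pt1 (ρ : Matrix (Fin 3 × Fin 3 × Fin 3) (Fin 3 × Fin 3 × Fin 3) ℂ) :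
    Matrix (Fin 3) (Fin 3) ℂ :=
  Matrix.of fun i j => ∑ b : Fin 3, ∑ c : Fin 3, ρ (i, b, c) (j, b, c)

/-- Partial trace keeping the second qutrit. -/
noncomputable def pt2 (ρ : Matrix (Fin 3 × Fin 3 × Fin 3) (Fin 3 × Fin 3 × Fin 3) ℂ) :
    Matrix (Fin 3) (Fin 3) ℂ :=
  Matrix.of fun i j => ∑ a : Fin 3, ∑ c : Fin 3, ρ (a, i, c) (a, j, c)

/-- Partial trace keeping the third qutrit. -/
noncomputable def pt3 (ρ : Matrix (Fin 3 × Fin 3 × Fin 3) (Fin 3 × Fin 3 × Fin 3) ℂ) :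
    Matrix (Fin 3) (Fin 3) ℂ :=
  Matrix.of fun i j => ∑ a : Fin 3, ∑ b : Fin 3, ρ (a, b, i) (a, b, j)

/-- The projector onto the 3-qutrit code. -/
noncomputable def qutritProj : Matrix (Fin 3 × Fin 3 × Fin 3) (Fin 3 × Fin 3 × Fin 3) ℂ :=
  ∑ m : Fin 3, vecMulVec (qutritCW m) (star (qutritCW m))


lemma vmv_mul_vmv {I : Type*} [Fintype I] [DecidableEq I]
    (u w : I → ℂ) (M : Matrix I I ℂ) :
    vecMulVec u (star u) * M * vecMulVec w (star w)
      = (star u ⬝ᵥ M *ᵥ w) • vecMulVec u (star w) := by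
  ext i j
  simp only [mul_apply, vecMulVec_apply, Matrix.smul_apply, dotProduct, mulVec,
    Pi.star_apply, smul_eq_mul, Finset.sum_mul, Finset.mul_sum]
  rw [Finset.sum_comm]
  congr 1; ext k; congr 1; ext l; ring

lemma sq3_aux : ((Real.sqrt 3 : ℝ) : ℂ)⁻¹ ^ 2 = 1/3 := by
  norm_cast
  rw [inv_pow, Real.sq_sqrt (by norm_num)]
  norm_num

lemma qutrit_assemble (c : ℂ)
    (M : Matrix (Fin 3 × Fin 3 × Fin 3) (Fin 3 × Fin 3 × Fin 3) ℂ)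
    (h : ∀ m m' : Fin 3, star (qutritCW m) ⬝ᵥ M *ᵥ qutritCW m'
      = c * (if m = m' then 1 else 0)) :
    qutritProj * M * qutritProj = c • qutritProj := by
  unfold qutritProj
  simp only [Finset.sum_mul, Finset.mul_sum, vmv_mul_vmv, h, Finset.smul_sum,
    mul_ite, mul_one, mul_zero, ite_smul, zero_smul, Finset.sum_ite_eq, Finset.sum_ite_eq',
    Finset.mem_univ, if_true]

set_option maxHeartbeats 1600000 in
/-- Knill–Laflamme for single-qutrit errors on the 3-qutrit code:
P E P = (Tr e / 3) P for any operator e acting on a single site. -/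
theorem three_qutrit_knill_laflamme (e : Matrix (Fin 3) (Fin 3) ℂ) :
    qutritProj * (e ⊗ₖ ((1 : Matrix (Fin 3) (Fin 3) ℂ) ⊗ₖ (1 : Matrix (Fin 3) (Fin 3) ℂ)))
        * qutritProj = (e.trace / 3) • qutritProj ∧
    qutritProj * ((1 : Matrix (Fin 3) (Fin 3) ℂ) ⊗ₖ (e ⊗ₖ (1 : Matrix (Fin 3) (Fin 3) ℂ)))
        * qutritProj = (e.trace / 3) • qutritProj ∧
    qutritProj * ((1 : Matrix (Fin 3) (Fin 3) ℂ) ⊗ₖ ((1 : Matrix (Fin 3) (Fin 3) ℂ) ⊗ₖ e))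
        * qutritProj = (e.trace / 3) • qutritProj := by
  refine ⟨qutrit_assemble _ _ fun m m' => ?_, qutrit_assemble _ _ fun m m' => ?_,
    qutrit_assemble _ _ fun m m' => ?_⟩ <;>
  fin_cases m <;> fin_cases m' <;>
    simp [qutritCW, dotProduct, mulVec, Fintype.sum_prod_type, Fin.sum_univ_three,
      kroneckerMap_apply, Matrix.one_apply, trace, Matrix.diag] <;>
    ring_nf <;> rw [sq3_aux] <;> ring
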